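/- Let n ≥ 4. Every four-cycle graph b(i,j,k,s) is orthogonal to CPI; the span of all four-cycle graphs equals the orthogonal complement of CPI inside the space of symmetric weighted graphs on n vertices and has dimension n(n−3)/2; moreover the family {b(0,1,j,k) : 2 ≤ j < k ≤ n−1} ∪ {b(0,1,j,2) : 3 ≤ j ≤ n−1} is a basis of this orthogonal complement. -/

import Mathlib

/-- A symmetric weighted graph on `n` vertices. -/
def IsSymGraph {n : ℕ} (d : Fin n → Fin n → ℝ) : Prop :=
  (∀ i j, d i j = d j i) ∧ ∀ i, d i i = 0

/-- The inner product of two weighted graphs. -/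
def ginner {n : ℕ} (d e : Fin n → Fin n → ℝ) : ℝ :=
  ∑ i : Fin n, ∑ j : Fin n, d i j * e i j

/-- The cyclic `d`-length of a map `u : Fin m → Fin n`
(the index `t + 1` is taken cyclically, via `finRotate`). -/
def cycLen {n m : ℕ} (d : Fin n → Fin n → ℝ) (u : Fin m → Fin n) : ℝ :=
  ∑ t : Fin m, d (u t) (u (finRotate m t))

/-- Membership in CPI: a symmetric graph whose off-diagonal entries are
`ω i + ω j` for some vertex weights `ω`. -/
def InCPI {n : ℕ} (d : Fin n → Fin n → ℝ) : Prop :=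
  IsSymGraph d ∧ ∃ ω : Fin n → ℝ, ∀ i j, i ≠ j → d i j = ω i + ω j

/-- `d` is orthogonal to every element of CPI. -/
def OrthCPI {n : ℕ} (d : Fin n → Fin n → ℝ) : Prop :=
  ∀ e : Fin n → Fin n → ℝ, InCPI e → ginner d e = 0

/-- The four-cycle graph on pairwise distinct vertices `i j k s`. -/
def fourCycle {n : ℕ} (i j k s : Fin n) : Fin n → Fin n → ℝ :=
  fun a b =>
    if (a, b) = (i, j) ∨ (a, b) = (j, i) then 1
    else if (a, b) = (j, k) ∨ (a, b) = (k, j) then -1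
    else if (a, b) = (k, s) ∨ (a, b) = (s, k) then 1
    else if (a, b) = (s, i) ∨ (a, b) = (i, s) then -1
    else 0

/-- The `d`-length of a Hamiltonian circuit given by a bijection `v`. -/
def hamLen {n : ℕ} (d : Fin n → Fin n → ℝ) (v : Fin n → Fin n) : ℝ :=
  ∑ t : Fin n, d (v t) (v (finRotate n t))

set_option maxHeartbeats 1000000

lemma fc_entry {n : ℕ} {i j k s : Fin n} (hij : i ≠ j) (hik : i ≠ k) (his : i ≠ s)
    (hjk : j ≠ k) (hjs : j ≠ s) (hks : k ≠ s) (a b : Fin n) :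
    fourCycle i j k s a b =
      (if (a = i ∧ b = j) ∨ (a = j ∧ b = i) then (1:ℝ) else 0)
      - (if (a = j ∧ b = k) ∨ (a = k ∧ b = j) then 1 else 0)
      + (if (a = k ∧ b = s) ∨ (a = s ∧ b = k) then 1 else 0)
      - (if (a = s ∧ b = i) ∨ (a = i ∧ b = s) then 1 else 0) := by
  simp only [fourCycle, Prod.mk.injEq, ne_eq, Fin.ext_iff] at *
  split_ifs <;> (try norm_num) <;> omega

lemma fc_symm {n : ℕ} (i j k s : Fin n) (a b : Fin n) :
    fourCycle i j k s a b = fourCycle i j k s b a := by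
  have h : ∀ (x y : Fin n), ((b, a) = (x, y) ∨ (b, a) = (y, x))
      = ((a, b) = (x, y) ∨ (a, b) = (y, x)) := by
    intro x y
    apply propext
    constructor <;> rintro (h | h) <;> simp_all [Prod.ext_iff] <;> tauto
  simp only [fourCycle, h i j, h j k, h k s, h s i]

lemma fc_diag {n : ℕ} {i j k s : Fin n} (hij : i ≠ j) (hik : i ≠ k) (his : i ≠ s)
    (hjk : j ≠ k) (hjs : j ≠ s) (hks : k ≠ s) (a : Fin n) :
    fourCycle i j k s a a = 0 := by
  rw [fc_entry hij hik his hjk hjs hks]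
  simp only [ne_eq, Fin.ext_iff] at *
  split_ifs <;> (try norm_num) <;> omega

lemma sum_ind {n : ℕ} {x y : Fin n} (hxy : x ≠ y) (a : Fin n) :
    ∑ b : Fin n, (if (a = x ∧ b = y) ∨ (a = y ∧ b = x) then (1:ℝ) else 0)
      = (if a = x then 1 else 0) + (if a = y then 1 else 0) := by
  have key : ∀ b : Fin n, (if (a = x ∧ b = y) ∨ (a = y ∧ b = x) then (1:ℝ) else 0)
      = (if a = x ∧ b = y then 1 else 0) + (if a = y ∧ b = x then 1 else 0) := by
    intro b
    simp only [ne_eq, Fin.ext_iff] at *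
    split_ifs <;> (try norm_num) <;> omega
  rw [Finset.sum_congr rfl fun b _ => key b, Finset.sum_add_distrib]
  congr 1
  · by_cases h : a = x
    · simp [h, Finset.sum_ite_eq']
    · simp [h]
  · by_cases h : a = y
    · simp [h, Finset.sum_ite_eq']
    · simp [h]

lemma fc_rowsum {n : ℕ} {i j k s : Fin n} (hij : i ≠ j) (hik : i ≠ k) (his : i ≠ s)
    (hjk : j ≠ k) (hjs : j ≠ s) (hks : k ≠ s) (a : Fin n) :
    ∑ b : Fin n, fourCycle i j k s a b = 0 := by
  rw [Finset.sum_congr rfl fun b _ => fc_entry hij hik his hjk hjs hks a b]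
  simp only [Finset.sum_sub_distrib, Finset.sum_add_distrib]
  rw [sum_ind hij, sum_ind hjk, sum_ind hks, sum_ind (Ne.symm his)]
  ring
lemma orth_of_rowsum {n : ℕ} {d : Fin n → Fin n → ℝ}
    (hsym : ∀ i j, d i j = d j i) (hdiag : ∀ i, d i i = 0)
    (hrow : ∀ i, ∑ j : Fin n, d i j = 0) : OrthCPI d := by
  rintro e ⟨⟨hesym, hediag⟩, ω, hω⟩
  have key : ∀ i j : Fin n, d i j * e i j = d i j * ω i + d i j * ω j := by
    intro i j
    by_cases h : i = j
    · subst h; rw [hdiag i]; ring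
    · rw [hω i j h]; ring
  unfold ginner
  calc ∑ i : Fin n, ∑ j : Fin n, d i j * e i j
      = ∑ i : Fin n, ∑ j : Fin n, (d i j * ω i + d i j * ω j) := by
        exact Finset.sum_congr rfl fun i _ => Finset.sum_congr rfl fun j _ => key i j
    _ = (∑ i : Fin n, ∑ j : Fin n, d i j * ω i) + ∑ i : Fin n, ∑ j : Fin n, d i j * ω j := by
        simp [Finset.sum_add_distrib]
    _ = 0 := by
        have h1 : ∀ i : Fin n, ∑ j : Fin n, d i j * ω i = 0 := by
          intro i; rw [← Finset.sum_mul, hrow i, zero_mul]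
        have h2 : ∑ i : Fin n, ∑ j : Fin n, d i j * ω j = 0 := by
          rw [Finset.sum_comm]
          have : ∀ j : Fin n, ∑ i : Fin n, d i j * ω j = 0 := by
            intro j
            rw [← Finset.sum_mul]
            have : ∑ i : Fin n, d i j = ∑ i : Fin n, d j i :=
              Finset.sum_congr rfl fun i _ => hsym i j
            rw [this, hrow j, zero_mul]
          simp [this]
        simp [h1, h2]

lemma rowsum_of_orth {n : ℕ} {d : Fin n → Fin n → ℝ}
    (hsg : IsSymGraph d) (ho : OrthCPI d) (i₀ : Fin n) : ∑ j : Fin n, d i₀ j = 0 := by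
  obtain ⟨hsym, hdiag⟩ := hsg
  set e : Fin n → Fin n → ℝ := fun a b =>
    if a = b then 0 else ((if a = i₀ then (1:ℝ) else 0) + (if b = i₀ then 1 else 0)) with he
  have hin : InCPI e := by
    refine ⟨⟨?_, ?_⟩, fun a => if a = i₀ then 1 else 0, ?_⟩
    · intro a b
      simp only [he]
      split_ifs <;> (try ring) <;> simp_all
    · intro a; simp [he]
    · intro a b hab
      simp only [he]
      rw [if_neg hab]
  have h0 := ho e hin
  have key : ∀ i j : Fin n, d i j * e i j
      = (if i = i₀ then d i j else 0) + (if j = i₀ then d i j else 0) := by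
    intro i j
    by_cases h : i = j
    · subst h
      simp only [he, if_pos rfl, hdiag i]
      split_ifs <;> ring
    · simp only [he, if_neg h]
      split_ifs <;> ring
  unfold ginner at h0
  rw [Finset.sum_congr rfl fun i _ => Finset.sum_congr rfl fun j _ => key i j] at h0
  simp only [Finset.sum_add_distrib] at h0
  have hA : ∑ i : Fin n, ∑ j : Fin n, (if i = i₀ then d i j else 0) = ∑ j : Fin n, d i₀ j := by
    have : ∀ i : Fin n, ∑ j : Fin n, (if i = i₀ then d i j else 0)
        = if i = i₀ then ∑ j : Fin n, d i j else 0 := by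
      intro i; split_ifs <;> simp
    rw [Finset.sum_congr rfl fun i _ => this i]
    simp [Finset.sum_ite_eq']
  have hB : ∑ i : Fin n, ∑ j : Fin n, (if j = i₀ then d i j else 0) = ∑ j : Fin n, d i₀ j := by
    have : ∀ i : Fin n, ∑ j : Fin n, (if j = i₀ then d i j else 0) = d i i₀ := by
      intro i; simp [Finset.sum_ite_eq']
    rw [Finset.sum_congr rfl fun i _ => this i]
    exact Finset.sum_congr rfl fun i _ => hsym i i₀
  rw [hA, hB] at h0
  linarith

def SGr (n : ℕ) : Submodule ℝ (Fin n → Fin n → ℝ) where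
  carrier := {d | (∀ i j, d i j = d j i) ∧ (∀ i, d i i = 0) ∧ ∀ i, ∑ j : Fin n, d i j = 0}
  add_mem' := by
    rintro a b ⟨h1, h2, h3⟩ ⟨g1, g2, g3⟩
    refine ⟨fun i j => by simp [h1 i j, g1 i j], fun i => by simp [h2 i, g2 i], fun i => ?_⟩
    simp only [Pi.add_apply]
    rw [Finset.sum_add_distrib, h3 i, g3 i, add_zero]
  zero_mem' := by
    refine ⟨fun i j => rfl, fun i => rfl, fun i => by simp⟩
  smul_mem' := by
    rintro c a ⟨h1, h2, h3⟩
    refine ⟨fun i j => by simp [h1 i j], fun i => by simp [h2 i], fun i => ?_⟩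
    simp only [Pi.smul_apply, smul_eq_mul]
    rw [← Finset.mul_sum, h3 i, mul_zero]

lemma SGr_carrier (n : ℕ) :
    (SGr n : Set (Fin n → Fin n → ℝ)) = {d | IsSymGraph d ∧ OrthCPI d} := by
  ext d
  constructor
  · rintro ⟨h1, h2, h3⟩
    exact ⟨⟨h1, h2⟩, orth_of_rowsum h1 h2 h3⟩
  · rintro ⟨⟨h1, h2⟩, ho⟩
    exact ⟨h1, h2, fun i => rowsum_of_orth ⟨h1, h2⟩ ho i⟩

section EntryLemmas
variable {n : ℕ} {z0 z1 z2 : Fin n}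

lemma EL1 (h0 : (z0:ℕ) = 0) (h1 : (z1:ℕ) = 1) {u v : Fin n} (hu : 2 ≤ (u:ℕ)) (huv : u < v)
    {j k : Fin n} (hj : 2 ≤ (j:ℕ)) (hjk : j < k) :
    fourCycle z0 z1 u v j k = if j = u ∧ k = v then 1 else 0 := by
  rw [fc_entry (by rw [Ne, Fin.ext_iff]; omega) (by rw [Ne, Fin.ext_iff]; omega)
    (by rw [Ne, Fin.ext_iff]; rw [Fin.lt_def] at huv; omega)
    (by rw [Ne, Fin.ext_iff]; omega) (by rw [Ne, Fin.ext_iff]; rw [Fin.lt_def] at huv; omega)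
    (by rw [Ne, Fin.ext_iff]; rw [Fin.lt_def] at huv; omega)]
  rw [Fin.lt_def] at huv hjk
  simp only [Fin.ext_iff, eq_self_iff_true, true_and, and_true, true_or, or_true, if_true]
  split_ifs <;> (try norm_num) <;> omega

lemma EL2 (h0 : (z0:ℕ) = 0) (h1 : (z1:ℕ) = 1) {u v : Fin n} (hu : 2 ≤ (u:ℕ)) (huv : u < v)
    {j : Fin n} (hj : 3 ≤ (j:ℕ)) :
    fourCycle z0 z1 u v z1 j = if u = j then -1 else 0 := by
  rw [fc_entry (by rw [Ne, Fin.ext_iff]; omega) (by rw [Ne, Fin.ext_iff]; omega)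
    (by rw [Ne, Fin.ext_iff]; rw [Fin.lt_def] at huv; omega)
    (by rw [Ne, Fin.ext_iff]; omega) (by rw [Ne, Fin.ext_iff]; rw [Fin.lt_def] at huv; omega)
    (by rw [Ne, Fin.ext_iff]; rw [Fin.lt_def] at huv; omega)]
  rw [Fin.lt_def] at huv
  simp only [Fin.ext_iff, eq_self_iff_true, true_and, and_true, true_or, or_true, if_true]
  split_ifs <;> (try norm_num) <;> omega

lemma EL3 (h0 : (z0:ℕ) = 0) (h1 : (z1:ℕ) = 1) (h2 : (z2:ℕ) = 2) {w : Fin n} (hw : 3 ≤ (w:ℕ))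
    {j k : Fin n} (hj : 2 ≤ (j:ℕ)) (hjk : j < k) :
    fourCycle z0 z1 w z2 j k = if j = z2 ∧ k = w then 1 else 0 := by
  rw [fc_entry (by rw [Ne, Fin.ext_iff]; omega) (by rw [Ne, Fin.ext_iff]; omega)
    (by rw [Ne, Fin.ext_iff]; omega) (by rw [Ne, Fin.ext_iff]; omega)
    (by rw [Ne, Fin.ext_iff]; omega) (by rw [Ne, Fin.ext_iff]; omega)]
  rw [Fin.lt_def] at hjk
  simp only [Fin.ext_iff, eq_self_iff_true, true_and, and_true, true_or, or_true, if_true]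
  split_ifs <;> (try norm_num) <;> omega

lemma EL4 (h0 : (z0:ℕ) = 0) (h1 : (z1:ℕ) = 1) (h2 : (z2:ℕ) = 2) {w : Fin n} (hw : 3 ≤ (w:ℕ))
    {j : Fin n} (hj : 3 ≤ (j:ℕ)) :
    fourCycle z0 z1 w z2 z1 j = if w = j then -1 else 0 := by
  rw [fc_entry (by rw [Ne, Fin.ext_iff]; omega) (by rw [Ne, Fin.ext_iff]; omega)
    (by rw [Ne, Fin.ext_iff]; omega) (by rw [Ne, Fin.ext_iff]; omega)
    (by rw [Ne, Fin.ext_iff]; omega) (by rw [Ne, Fin.ext_iff]; omega)]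
  simp only [Fin.ext_iff, eq_self_iff_true, true_and, and_true, true_or, or_true, if_true]
  split_ifs <;> (try norm_num) <;> omega

end EntryLemmas

abbrev PT (n : ℕ) := {p : Fin n × Fin n // 2 ≤ (p.1 : ℕ) ∧ p.1 < p.2}
abbrev JT (n : ℕ) := {j : Fin n // 3 ≤ (j : ℕ)}

noncomputable def combo {n : ℕ} (z0 z1 z2 : Fin n) (a : PT n → ℝ) (c : JT n → ℝ) :
    Fin n → Fin n → ℝ :=
  (∑ p : PT n, a p • fourCycle z0 z1 p.1.1 p.1.2) + ∑ j : JT n, c j • fourCycle z0 z1 j.1 z2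

section Combo
variable {n : ℕ} {z0 z1 z2 : Fin n} (h0 : (z0:ℕ) = 0) (h1 : (z1:ℕ) = 1) (h2 : (z2:ℕ) = 2)
  (a : PT n → ℝ) (c : JT n → ℝ)

lemma combo_apply (u v : Fin n) :
    combo z0 z1 z2 a c u v = (∑ p : PT n, a p * fourCycle z0 z1 p.1.1 p.1.2 u v)
      + ∑ j : JT n, c j * fourCycle z0 z1 j.1 z2 u v := by
  unfold combo
  simp [Finset.sum_apply]

include h0 h1 h2 in
lemma Y1 {j k : Fin n} (hj : 3 ≤ (j:ℕ)) (hjk : j < k) :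
    combo z0 z1 z2 a c j k = a ⟨(j, k), ⟨show 2 ≤ (j:ℕ) by omega, hjk⟩⟩ := by
  rw [combo_apply]
  have e1 : ∀ p : PT n, a p * fourCycle z0 z1 p.1.1 p.1.2 j k
      = if j = p.1.1 ∧ k = p.1.2 then a p else 0 := by
    intro p
    rw [EL1 h0 h1 p.2.1 p.2.2 (by omega) hjk]
    split_ifs <;> ring
  have e2 : ∀ w : JT n, c w * fourCycle z0 z1 w.1 z2 j k = 0 := by
    intro w
    rw [EL3 h0 h1 h2 w.2 (by omega) hjk, if_neg, mul_zero]
    rintro ⟨hjz, -⟩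
    rw [Fin.ext_iff] at hjz; omega
  rw [Finset.sum_congr rfl fun p _ => e1 p, Finset.sum_congr rfl fun w _ => e2 w,
    Finset.sum_const_zero, add_zero]
  rw [Finset.sum_eq_single (⟨(j, k), ⟨show 2 ≤ (j:ℕ) by omega, hjk⟩⟩ : PT n)]
  · simp
  · intro p _ hp
    rw [if_neg]
    rintro ⟨hj', hk'⟩
    apply hp
    apply Subtype.ext
    exact Prod.ext hj'.symm hk'.symm
  · intro h; exact absurd (Finset.mem_univ _) h

include h0 h1 h2 in
lemma Y2 {k : Fin n} (hk : 3 ≤ (k:ℕ)) :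
    combo z0 z1 z2 a c z2 k
      = a ⟨(z2, k), ⟨show 2 ≤ (z2:ℕ) by omega, show z2 < k by rw [Fin.lt_def]; omega⟩⟩ + c ⟨k, hk⟩ := by
  rw [combo_apply]
  have hlt : z2 < k := by rw [Fin.lt_def]; omega
  have e1 : ∀ p : PT n, a p * fourCycle z0 z1 p.1.1 p.1.2 z2 k
      = if z2 = p.1.1 ∧ k = p.1.2 then a p else 0 := by
    intro p
    rw [EL1 h0 h1 p.2.1 p.2.2 (by omega) hlt]
    split_ifs <;> ring
  have e2 : ∀ w : JT n, c w * fourCycle z0 z1 w.1 z2 z2 k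
      = if k = w.1 then c w else 0 := by
    intro w
    rw [EL3 h0 h1 h2 w.2 (by omega) hlt]
    simp only [eq_self_iff_true, true_and]
    split_ifs <;> ring
  rw [Finset.sum_congr rfl fun p _ => e1 p, Finset.sum_congr rfl fun w _ => e2 w]
  congr 1
  · rw [Finset.sum_eq_single (⟨(z2, k), ⟨show 2 ≤ (z2:ℕ) by omega, hlt⟩⟩ : PT n)]
    · simp
    · intro p _ hp
      rw [if_neg]
      rintro ⟨hj', hk'⟩
      apply hp
      apply Subtype.ext
      exact Prod.ext hj'.symm hk'.symm
    · intro h; exact absurd (Finset.mem_univ _) h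
  · rw [Finset.sum_eq_single (⟨k, hk⟩ : JT n)]
    · simp
    · intro w _ hw
      rw [if_neg]
      intro hk'
      exact hw (Subtype.ext hk'.symm)
    · intro h; exact absurd (Finset.mem_univ _) h

include h0 h1 h2 in
lemma Y3 {j : Fin n} (hj : 3 ≤ (j:ℕ)) :
    combo z0 z1 z2 a c z1 j
      = -(∑ p : PT n, if p.1.1 = j then a p else 0) - c ⟨j, hj⟩ := by
  rw [combo_apply]
  have e1 : ∀ p : PT n, a p * fourCycle z0 z1 p.1.1 p.1.2 z1 j
      = -(if p.1.1 = j then a p else 0) := by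
    intro p
    rw [EL2 h0 h1 p.2.1 p.2.2 hj]
    by_cases h : p.1.1 = j
    · rw [if_pos h, if_pos h]; ring
    · rw [if_neg h, if_neg h]; ring
  have e2 : ∀ w : JT n, c w * fourCycle z0 z1 w.1 z2 z1 j
      = -(if w.1 = j then c w else 0) := by
    intro w
    rw [EL4 h0 h1 h2 w.2 hj]
    by_cases h : w.1 = j
    · rw [if_pos h, if_pos h]; ring
    · rw [if_neg h, if_neg h]; ring
  rw [Finset.sum_congr rfl fun p _ => e1 p, Finset.sum_congr rfl fun w _ => e2 w]
  rw [Finset.sum_neg_distrib, Finset.sum_neg_distrib]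
  have : ∑ w : JT n, (if w.1 = j then c w else 0) = c ⟨j, hj⟩ := by
    rw [Finset.sum_eq_single (⟨j, hj⟩ : JT n)]
    · simp
    · intro w _ hw
      rw [if_neg]
      intro hk'
      exact hw (Subtype.ext hk')
    · intro h; exact absurd (Finset.mem_univ _) h
  rw [this]
  ring

end Combo

lemma SUBSUM {n : ℕ} {j : Fin n} (hj : 3 ≤ (j:ℕ)) (f : Fin n → ℝ) :
    ∑ p : PT n, (if p.1.1 = j then f p.1.2 else 0)
      = ∑ k : Fin n, if j < k then f k else 0 := by
  classical
  have h := Finset.sum_subtype (p := fun q : Fin n × Fin n => 2 ≤ (q.1 : ℕ) ∧ q.1 < q.2)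
    (F := inferInstanceAs (Fintype (PT n)))
    (Finset.univ.filter fun q : Fin n × Fin n => 2 ≤ (q.1 : ℕ) ∧ q.1 < q.2)
    (fun q => by simp) (fun q : Fin n × Fin n => if q.1 = j then f q.2 else 0)
  rw [← h, Finset.sum_filter, Fintype.sum_prod_type]
  have key : ∀ x y : Fin n,
      (if 2 ≤ (x:ℕ) ∧ x < y then (if x = j then f y else 0) else 0)
        = if x = j then (if j < y then f y else 0) else 0 := by
    intro x y
    by_cases hx : x = j
    · subst hx
      simp only [if_pos rfl, Fin.lt_def]
      split_ifs <;> (try rfl) <;> (exfalso; omega)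
    · rw [if_neg hx]
      split_ifs <;> simp [hx]
  rw [Finset.sum_congr rfl fun x _ => Finset.sum_congr rfl fun y _ => key x y]
  have key2 : ∀ x : Fin n, (∑ y : Fin n, if x = j then (if j < y then f y else 0) else 0)
      = if x = j then (∑ y : Fin n, if j < y then f y else 0) else 0 := by
    intro x; split_ifs <;> simp
  rw [Finset.sum_congr rfl fun x _ => key2 x]
  simp [Finset.sum_ite_eq']

lemma INJ {n : ℕ} (hn : 4 ≤ n) {z0 z1 z2 : Fin n} (h0 : (z0:ℕ) = 0) (h1 : (z1:ℕ) = 1)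
    (h2 : (z2:ℕ) = 2) {d : Fin n → Fin n → ℝ} (hsym : ∀ i j, d i j = d j i)
    (hdiag : ∀ i, d i i = 0) (hrow : ∀ i, ∑ j : Fin n, d i j = 0)
    (hint : ∀ j k : Fin n, 2 ≤ (j:ℕ) → j < k → d j k = 0)
    (h1j : ∀ j : Fin n, 3 ≤ (j:ℕ) → d z1 j = 0) : d = 0 := by
  have hA : ∀ j k : Fin n, 2 ≤ (j:ℕ) → 2 ≤ (k:ℕ) → d j k = 0 := by
    intro j k hjv hkv
    rcases lt_trichotomy j k with h | h | h
    · exact hint j k hjv h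
    · subst h; exact hdiag j
    · rw [hsym]; exact hint k j hkv h
  have h1j' : ∀ j : Fin n, 3 ≤ (j:ℕ) → d j z1 = 0 := fun j hj => by
    rw [hsym]; exact h1j j hj
  have hB : ∀ i : Fin n, 3 ≤ (i:ℕ) → d z0 i = 0 := by
    intro i hi
    have hr := hrow i
    have key : ∀ j : Fin n, d i j = if j = z0 then d i z0 else 0 := by
      intro j
      by_cases hj0 : j = z0
      · simp [hj0]
      · rw [if_neg hj0]
        by_cases hj1 : j = z1
        · subst hj1; exact h1j' i hi
        · have hne0 : (j:ℕ) ≠ 0 := fun h => hj0 (Fin.ext (by omega))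
          have hne1 : (j:ℕ) ≠ 1 := fun h => hj1 (Fin.ext (by omega))
          exact hA i j (by omega) (by omega)
    rw [Finset.sum_congr rfl fun j _ => key j] at hr
    simp only [Finset.sum_ite_eq', Finset.mem_univ, if_pos] at hr
    rw [hsym]; exact hr
  have hz01 : z0 ≠ z1 := fun h => by rw [Fin.ext_iff] at h; omega
  have hz02 : z0 ≠ z2 := fun h => by rw [Fin.ext_iff] at h; omega
  have hz12 : z1 ≠ z2 := fun h => by rw [Fin.ext_iff] at h; omega
  -- row z0
  have e0 : d z0 z1 + d z0 z2 = 0 := by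
    have hr := hrow z0
    have key : ∀ j : Fin n, d z0 j
        = (if j = z1 then d z0 z1 else 0) + (if j = z2 then d z0 z2 else 0) := by
      intro j
      by_cases hj1 : j = z1
      · rw [hj1, if_pos rfl, if_neg hz12, add_zero]
      · by_cases hj2 : j = z2
        · rw [hj2, if_neg (Ne.symm hz12), if_pos rfl, zero_add]
        · rw [if_neg hj1, if_neg hj2, add_zero]
          by_cases hj0 : j = z0
          · rw [hj0]; exact hdiag z0
          · have hne0 : (j:ℕ) ≠ 0 := fun h => hj0 (Fin.ext (by omega))
            have hne1 : (j:ℕ) ≠ 1 := fun h => hj1 (Fin.ext (by omega))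
            have hne2 : (j:ℕ) ≠ 2 := fun h => hj2 (Fin.ext (by omega))
            exact hB j (by omega)
    rw [Finset.sum_congr rfl fun j _ => key j, Finset.sum_add_distrib] at hr
    simp only [Finset.sum_ite_eq', Finset.mem_univ, if_pos] at hr
    exact hr
  -- row z1
  have e1 : d z1 z0 + d z1 z2 = 0 := by
    have hr := hrow z1
    have key : ∀ j : Fin n, d z1 j
        = (if j = z0 then d z1 z0 else 0) + (if j = z2 then d z1 z2 else 0) := by
      intro j
      by_cases hj0 : j = z0
      · rw [hj0, if_pos rfl, if_neg hz02, add_zero]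
      · by_cases hj2 : j = z2
        · rw [hj2, if_neg (Ne.symm hz02), if_pos rfl, zero_add]
        · rw [if_neg hj0, if_neg hj2, add_zero]
          by_cases hj1 : j = z1
          · rw [hj1]; exact hdiag z1
          · have hne0 : (j:ℕ) ≠ 0 := fun h => hj0 (Fin.ext (by omega))
            have hne1 : (j:ℕ) ≠ 1 := fun h => hj1 (Fin.ext (by omega))
            have hne2 : (j:ℕ) ≠ 2 := fun h => hj2 (Fin.ext (by omega))
            exact h1j j (by omega)
    rw [Finset.sum_congr rfl fun j _ => key j, Finset.sum_add_distrib] at hr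
    simp only [Finset.sum_ite_eq', Finset.mem_univ, if_pos] at hr
    exact hr
  -- row z2
  have e2 : d z2 z0 + d z2 z1 = 0 := by
    have hr := hrow z2
    have key : ∀ j : Fin n, d z2 j
        = (if j = z0 then d z2 z0 else 0) + (if j = z1 then d z2 z1 else 0) := by
      intro j
      by_cases hj0 : j = z0
      · rw [hj0, if_pos rfl, if_neg hz01, add_zero]
      · by_cases hj1 : j = z1
        · rw [hj1, if_neg (Ne.symm hz01), if_pos rfl, zero_add]
        · rw [if_neg hj0, if_neg hj1, add_zero]
          by_cases hj2 : j = z2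
          · rw [hj2]; exact hdiag z2
          · have hne0 : (j:ℕ) ≠ 0 := fun h => hj0 (Fin.ext (by omega))
            have hne1 : (j:ℕ) ≠ 1 := fun h => hj1 (Fin.ext (by omega))
            have hne2 : (j:ℕ) ≠ 2 := fun h => hj2 (Fin.ext (by omega))
            exact hA z2 j (by omega) (by omega)
    rw [Finset.sum_congr rfl fun j _ => key j, Finset.sum_add_distrib] at hr
    simp only [Finset.sum_ite_eq', Finset.mem_univ, if_pos] at hr
    exact hr
  have hx : d z0 z1 = 0 := by
    have h10 : d z1 z0 = d z0 z1 := hsym z1 z0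
    have h20 : d z2 z0 = d z0 z2 := hsym z2 z0
    have h21 : d z2 z1 = d z1 z2 := hsym z2 z1
    linarith
  have hy : d z0 z2 = 0 := by linarith
  have hz : d z1 z2 = 0 := by
    have h10 : d z1 z0 = d z0 z1 := hsym z1 z0
    linarith [e1]
  have main : ∀ i j : Fin n, (i:ℕ) < (j:ℕ) → d i j = 0 := by
    intro i j hlt
    by_cases hi2 : 2 ≤ (i:ℕ)
    · exact hA i j hi2 (by omega)
    · by_cases hi1 : (i:ℕ) = 1
      · have hiz : i = z1 := Fin.ext (by omega)
        rw [hiz]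
        by_cases hj2 : (j:ℕ) = 2
        · have hjz : j = z2 := Fin.ext (by omega)
          rw [hjz]; exact hz
        · exact h1j j (by omega)
      · have hi0 : (i:ℕ) = 0 := by omega
        have hiz : i = z0 := Fin.ext (by omega)
        rw [hiz]
        by_cases hj1 : (j:ℕ) = 1
        · have hjz : j = z1 := Fin.ext (by omega); rw [hjz]; exact hx
        · by_cases hj2 : (j:ℕ) = 2
          · have hjz : j = z2 := Fin.ext (by omega); rw [hjz]; exact hy
          · exact hB j (by omega)
  funext i j
  show d i j = 0
  rcases lt_trichotomy ((i:ℕ)) ((j:ℕ)) with h | h | h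
  · exact main i j h
  · have hij : i = j := Fin.ext h
    rw [hij]; exact hdiag j
  · rw [hsym]; exact main j i h

section Fam
variable {n : ℕ} {z0 z1 z2 : Fin n} (h0 : (z0:ℕ) = 0) (h1 : (z1:ℕ) = 1) (h2 : (z2:ℕ) = 2)

include h0 h1 in
lemma mem1 (p : PT n) : fourCycle z0 z1 p.1.1 p.1.2 ∈ SGr n := by
  have d1 : z0 ≠ z1 := fun h => by rw [Fin.ext_iff] at h; omega
  have hp1 := p.2.1
  have hp2 := p.2.2
  rw [Fin.lt_def] at hp2
  have d2 : z0 ≠ p.1.1 := fun h => by rw [Fin.ext_iff] at h; omega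
  have d3 : z0 ≠ p.1.2 := fun h => by rw [Fin.ext_iff] at h; omega
  have d4 : z1 ≠ p.1.1 := fun h => by rw [Fin.ext_iff] at h; omega
  have d5 : z1 ≠ p.1.2 := fun h => by rw [Fin.ext_iff] at h; omega
  have d6 : p.1.1 ≠ p.1.2 := fun h => by rw [Fin.ext_iff] at h; omega
  exact ⟨fc_symm _ _ _ _, fc_diag d1 d2 d3 d4 d5 d6, fc_rowsum d1 d2 d3 d4 d5 d6⟩

include h0 h1 h2 in
lemma mem2 (w : JT n) : fourCycle z0 z1 w.1 z2 ∈ SGr n := by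
  have hw := w.2
  have d1 : z0 ≠ z1 := fun h => by rw [Fin.ext_iff] at h; omega
  have d2 : z0 ≠ w.1 := fun h => by rw [Fin.ext_iff] at h; omega
  have d3 : z0 ≠ z2 := fun h => by rw [Fin.ext_iff] at h; omega
  have d4 : z1 ≠ w.1 := fun h => by rw [Fin.ext_iff] at h; omega
  have d5 : z1 ≠ z2 := fun h => by rw [Fin.ext_iff] at h; omega
  have d6 : w.1 ≠ z2 := fun h => by rw [Fin.ext_iff] at h; omega
  exact ⟨fc_symm _ _ _ _, fc_diag d1 d2 d3 d4 d5 d6, fc_rowsum d1 d2 d3 d4 d5 d6⟩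

variable (a : PT n → ℝ) (c : JT n → ℝ)

include h0 h1 h2 in
lemma Y1' (q : PT n) (hq : 3 ≤ ((q : Fin n × Fin n).1 : ℕ)) :
    combo z0 z1 z2 a c q.1.1 q.1.2 = a q := by
  have h := Y1 h0 h1 h2 a c hq q.2.2
  rw [show (⟨(q.1.1, q.1.2), ⟨show 2 ≤ (q.1.1:ℕ) by omega, q.2.2⟩⟩ : PT n) = q from
    Subtype.ext Prod.mk.eta] at h
  exact h

include h0 h1 h2 in
lemma Y2' (q : PT n) (hq : ((q : Fin n × Fin n).1 : ℕ) = 2) :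
    combo z0 z1 z2 a c z2 q.1.2
      = a q + c ⟨q.1.2, by have := q.2.2; rw [Fin.lt_def] at this; omega⟩ := by
  have hk : 3 ≤ ((q : Fin n × Fin n).2 : ℕ) := by
    have := q.2.2; rw [Fin.lt_def] at this; omega
  have h := Y2 h0 h1 h2 a c hk
  have hq1 : q.1.1 = z2 := Fin.ext (by omega)
  have he : (⟨(z2, q.1.2), ⟨show 2 ≤ (z2:ℕ) by omega,
      show z2 < q.1.2 by rw [Fin.lt_def]; omega⟩⟩ : PT n) = q := by
    apply Subtype.ext
    exact hq1 ▸ Prod.mk.eta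
  rw [he] at h
  exact h

include h0 h1 h2 in
lemma indep : LinearIndependent ℝ (Sum.elim
    (fun p : PT n => fourCycle z0 z1 p.1.1 p.1.2)
    (fun j : JT n => fourCycle z0 z1 j.1 z2)) := by
  rw [Fintype.linearIndependent_iff]
  intro co hco
  have hcombo : combo z0 z1 z2 (fun p => co (Sum.inl p)) (fun w => co (Sum.inr w)) = 0 := by
    rw [Fintype.sum_sum_type] at hco
    simp only [Sum.elim_inl, Sum.elim_inr] at hco
    exact hco
  set a : PT n → ℝ := fun p => co (Sum.inl p) with ha
  set c : JT n → ℝ := fun w => co (Sum.inr w) with hc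
  have hstep1 : ∀ p : PT n, 3 ≤ ((p : Fin n × Fin n).1 : ℕ) → a p = 0 := by
    intro p hp
    have h := congrFun (congrFun hcombo p.1.1) p.1.2
    rw [Y1' h0 h1 h2 a c p hp] at h
    simpa using h
  have hstep2 : ∀ w : JT n, c w = 0 := by
    intro w
    have h := congrFun (congrFun hcombo z1) w.1
    rw [Y3 h0 h1 h2 a c w.2] at h
    have hsum : (∑ p : PT n, if (p : Fin n × Fin n).1 = w.1 then a p else 0) = 0 := by
      apply Finset.sum_eq_zero
      intro p _
      split_ifs with hcond
      · exact hstep1 p (by rw [Fin.ext_iff] at hcond; have := w.2; omega)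
      · rfl
    rw [hsum] at h
    simp only [Pi.zero_apply] at h
    have : c ⟨w.1, w.2⟩ = 0 := by linarith
    exact this
  have hstep3 : ∀ p : PT n, ((p : Fin n × Fin n).1 : ℕ) = 2 → a p = 0 := by
    intro p hp
    have h := congrFun (congrFun hcombo z2) p.1.2
    rw [Y2' h0 h1 h2 a c p hp] at h
    rw [hstep2 _] at h
    simpa using h
  intro i
  rcases i with p | w
  · show a p = 0
    rcases Nat.lt_or_ge ((p : Fin n × Fin n).1 : ℕ) 3 with h | h
    · exact hstep3 p (by have := p.2.1; omega)
    · exact hstep1 p h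
  · exact hstep2 w

end Fam

noncomputable def Cf {n : ℕ} (z1 : Fin n) (d : Fin n → Fin n → ℝ) : Fin n → ℝ :=
  fun k => -(d z1 k) - ∑ k' : Fin n, (if k < k' then d k k' else 0)
noncomputable def aF {n : ℕ} (z1 : Fin n) (d : Fin n → Fin n → ℝ) : PT n → ℝ :=
  fun p => if ((p : Fin n × Fin n).1 : ℕ) = 2
    then d p.1.1 p.1.2 - Cf z1 d p.1.2 else d p.1.1 p.1.2
noncomputable def cF {n : ℕ} (z1 : Fin n) (d : Fin n → Fin n → ℝ) : JT n → ℝ :=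
  fun w => Cf z1 d w.1

lemma span_eq {n : ℕ} (hn : 4 ≤ n) {z0 z1 z2 : Fin n} (h0 : (z0:ℕ) = 0) (h1 : (z1:ℕ) = 1)
    (h2 : (z2:ℕ) = 2) :
    Submodule.span ℝ (Set.range (Sum.elim
      (fun p : PT n => fourCycle z0 z1 p.1.1 p.1.2)
      (fun j : JT n => fourCycle z0 z1 j.1 z2))) = SGr n := by
  apply le_antisymm
  · rw [Submodule.span_le]
    rintro x ⟨i, rfl⟩
    rcases i with p | w
    · exact mem1 h0 h1 p
    · exact mem2 h0 h1 h2 w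
  · intro d hd
    obtain ⟨hsym, hdiag, hrow⟩ := hd
    set x := combo z0 z1 z2 (aF z1 d) (cF z1 d) with hxdef
    have hxspan : x ∈ Submodule.span ℝ (Set.range (Sum.elim
        (fun p : PT n => fourCycle z0 z1 p.1.1 p.1.2)
        (fun j : JT n => fourCycle z0 z1 j.1 z2))) := by
      rw [hxdef]
      unfold combo
      apply Submodule.add_mem
      · apply Submodule.sum_mem
        intro p _
        exact Submodule.smul_mem _ _ (Submodule.subset_span ⟨Sum.inl p, rfl⟩)
      · apply Submodule.sum_mem
        intro w _
        exact Submodule.smul_mem _ _ (Submodule.subset_span ⟨Sum.inr w, rfl⟩)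
    have hxS : x ∈ SGr n := by
      rw [hxdef]
      unfold combo
      apply Submodule.add_mem
      · exact Submodule.sum_mem _ fun p _ => Submodule.smul_mem _ _ (mem1 h0 h1 p)
      · exact Submodule.sum_mem _ fun w _ => Submodule.smul_mem _ _ (mem2 h0 h1 h2 w)
    obtain ⟨hsx, hdx, hrx⟩ := hxS
    -- entry identities
    have hint : ∀ j k : Fin n, 2 ≤ (j:ℕ) → j < k → d j k - x j k = 0 := by
      intro j k hj2 hjk
      rcases Nat.lt_or_ge ((j:ℕ)) 3 with hj3 | hj3
      · -- j.val = 2, so j = z2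
        have hjz : j = z2 := Fin.ext (by omega)
        rw [hjz] at hjk ⊢
        have hy : x z2 k = aF z1 d ⟨(z2, k), ⟨show 2 ≤ (z2:ℕ) by omega, hjk⟩⟩
            + cF z1 d ⟨k, by rw [Fin.lt_def] at hjk; omega⟩ :=
          Y2' h0 h1 h2 (aF z1 d) (cF z1 d) ⟨(z2, k), ⟨show 2 ≤ (z2:ℕ) by omega, hjk⟩⟩
            (by show (z2:ℕ) = 2; omega)
        rw [hy]
        have ha : aF z1 d ⟨(z2, k), ⟨show 2 ≤ (z2:ℕ) by omega, hjk⟩⟩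
            = d z2 k - Cf z1 d k := by
          unfold aF
          rw [if_pos (by show (z2:ℕ) = 2; omega)]
        have hcc : cF z1 d (⟨k, by rw [Fin.lt_def] at hjk; omega⟩ : JT n) = Cf z1 d k := rfl
        rw [ha, hcc]
        ring
      · have hy : x j k = aF z1 d ⟨(j, k), ⟨show 2 ≤ (j:ℕ) by omega, hjk⟩⟩ :=
          Y1' h0 h1 h2 (aF z1 d) (cF z1 d) ⟨(j, k), ⟨show 2 ≤ (j:ℕ) by omega, hjk⟩⟩
            (by show 3 ≤ (j:ℕ); omega)
        rw [hy]
        have ha : aF z1 d ⟨(j, k), ⟨show 2 ≤ (j:ℕ) by omega, hjk⟩⟩ = d j k := by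
          unfold aF
          rw [if_neg (by show ¬ (j:ℕ) = 2; omega)]
        rw [ha]
        ring
    have h1j : ∀ j : Fin n, 3 ≤ (j:ℕ) → d z1 j - x z1 j = 0 := by
      intro j hj
      have hy : x z1 j = -(∑ p : PT n, if (p : Fin n × Fin n).1 = j then aF z1 d p else 0)
          - cF z1 d ⟨j, hj⟩ := Y3 h0 h1 h2 (aF z1 d) (cF z1 d) hj
      have hsum : (∑ p : PT n, if (p : Fin n × Fin n).1 = j then aF z1 d p else 0)
          = ∑ p : PT n, (if (p : Fin n × Fin n).1 = j then d j (p : Fin n × Fin n).2 else 0) := by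
        apply Finset.sum_congr rfl
        intro p _
        by_cases hc : (p : Fin n × Fin n).1 = j
        · rw [if_pos hc, if_pos hc]
          unfold aF
          rw [if_neg (by rw [Fin.ext_iff] at hc; omega), hc]
        · rw [if_neg hc, if_neg hc]
      rw [hsum, SUBSUM hj (fun k => d j k)] at hy
      have hcf : cF z1 d (⟨j, hj⟩ : JT n)
          = -(d z1 j) - ∑ k' : Fin n, (if j < k' then d j k' else 0) := rfl
      rw [hcf] at hy
      rw [hy]
      ring
    have hzero : (fun i j => d i j - x i j) = 0 :=
      INJ hn h0 h1 h2 (d := fun i j => d i j - x i j)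
        (fun i j => by show d i j - x i j = d j i - x j i; rw [hsym i j, hsx i j])
        (fun i => by show d i i - x i i = 0; rw [hdiag i, hdx i]; ring)
        (fun i => by
          show (∑ j : Fin n, (d i j - x i j)) = 0
          rw [Finset.sum_sub_distrib, hrow i, hrx i]; ring)
        hint h1j
    have hdxeq : d = x := by
      funext i j
      have := congrFun (congrFun hzero i) j
      simp only [Pi.zero_apply] at this
      linarith
    rw [hdxeq]
    exact hxspan

lemma card_JT {n : ℕ} : Fintype.card (JT n) = n - 3 := by
  rw [Fintype.card_subtype]
  rw [Finset.card_filter]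
  rw [Fin.sum_univ_eq_sum_range (fun m => if 3 ≤ m then 1 else 0) n]
  rw [← Finset.card_filter]
  have : (Finset.range n).filter (fun m => 3 ≤ m) = Finset.Ico 3 n := by
    ext m; simp [Finset.mem_Ico, Finset.mem_range]; omega
  rw [this, Nat.card_Ico]

lemma card_PT {n : ℕ} : Fintype.card (PT n) = (n - 2) * (n - 3) / 2 := by
  rw [Fintype.card_subtype, Finset.card_filter, Fintype.sum_prod_type]
  have step1 : ∀ x : Fin n, (∑ y : Fin n, if 2 ≤ (x:ℕ) ∧ x < y then 1 else 0)
      = if 2 ≤ (x:ℕ) then n - ((x:ℕ) + 1) else 0 := by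
    intro x
    by_cases hx : 2 ≤ (x:ℕ)
    · rw [if_pos hx]
      have e1 : ∀ y : Fin n, (if 2 ≤ (x:ℕ) ∧ x < y then 1 else 0)
          = if (x:ℕ) < (y:ℕ) then 1 else 0 := by
        intro y
        simp only [Fin.lt_def, hx, true_and]
      rw [Finset.sum_congr rfl fun y _ => e1 y]
      rw [Fin.sum_univ_eq_sum_range (fun m => if (x:ℕ) < m then 1 else 0) n]
      rw [← Finset.card_filter]
      have : (Finset.range n).filter (fun m => (x:ℕ) < m) = Finset.Ico ((x:ℕ)+1) n := by
        ext m; simp [Finset.mem_Ico, Finset.mem_range]; omega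
      rw [this, Nat.card_Ico]
    · rw [if_neg hx]
      apply Finset.sum_eq_zero
      intro y _
      rw [if_neg (by tauto)]
  rw [Finset.sum_congr rfl fun x _ => step1 x]
  rw [Fin.sum_univ_eq_sum_range (fun m => if 2 ≤ m then n - (m + 1) else 0) n]
  rw [← Finset.sum_filter]
  have : (Finset.range n).filter (fun m => 2 ≤ m) = Finset.Ico 2 n := by
    ext m; simp [Finset.mem_Ico, Finset.mem_range]; omega
  rw [this]
  rw [Finset.sum_Ico_eq_sum_range]
  have e2 : ∀ t, n - (2 + t + 1) = (n - 2) - 1 - t := by intro t; omega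
  rw [Finset.sum_congr rfl fun t _ => e2 t]
  rw [Finset.sum_range_reflect (fun t => t) (n - 2)]
  rw [Finset.sum_range_id]
  have h3 : n - 2 - 1 = n - 3 := by omega
  rw [h3]

lemma card_total {n : ℕ} (hn : 4 ≤ n) :
    Fintype.card (PT n) + Fintype.card (JT n) = n * (n - 3) / 2 := by
  rw [card_PT, card_JT]
  obtain ⟨k, rfl⟩ : ∃ k, n = k + 3 := ⟨n - 3, by omega⟩
  have h1 : k + 3 - 2 = k + 1 := by omega
  have h2 : k + 3 - 3 = k := by omega
  rw [h1, h2]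
  rw [show (k + 3) * k = (k + 1) * k + 2 * k by ring]
  rw [Nat.add_mul_div_left _ _ (by norm_num : (0:ℕ) < 2)]

lemma finrank_SGr {n : ℕ} (hn : 4 ≤ n) {z0 z1 z2 : Fin n} (h0 : (z0:ℕ) = 0)
    (h1 : (z1:ℕ) = 1) (h2 : (z2:ℕ) = 2) :
    Module.finrank ℝ (SGr n) = n * (n - 3) / 2 := by
  set F := Sum.elim
    (fun p : PT n => fourCycle z0 z1 p.1.1 p.1.2)
    (fun j : JT n => fourCycle z0 z1 j.1 z2) with hF
  have hmem : ∀ i, F i ∈ SGr n := by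
    rintro (p | w)
    · exact mem1 h0 h1 p
    · exact mem2 h0 h1 h2 w
  set v' : PT n ⊕ JT n → SGr n := fun i => ⟨F i, hmem i⟩ with hv'
  have hcomp : ((SGr n).subtype : SGr n →ₗ[ℝ] (Fin n → Fin n → ℝ)) ∘ v' = F := rfl
  have hli : LinearIndependent ℝ v' := by
    apply LinearIndependent.of_comp ((SGr n).subtype)
    rw [show ((SGr n).subtype : SGr n →ₗ[ℝ] (Fin n → Fin n → ℝ)) ∘ v' = F from rfl]
    exact indep h0 h1 h2
  have hspan : Submodule.span ℝ (Set.range v') = ⊤ := by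
    apply Submodule.map_injective_of_injective ((SGr n).injective_subtype)
    rw [Submodule.map_span, ← Set.range_comp, hcomp, hF, span_eq hn h0 h1 h2,
      Submodule.map_top, Submodule.range_subtype]
  have b : Module.Basis (PT n ⊕ JT n) ℝ (SGr n) := Module.Basis.mk hli (by rw [hspan])
  rw [Module.finrank_eq_card_basis b, Fintype.card_sum, card_total hn]

lemma span_bigset {n : ℕ} (hn : 4 ≤ n) {z0 z1 z2 : Fin n} (h0 : (z0:ℕ) = 0)
    (h1 : (z1:ℕ) = 1) (h2 : (z2:ℕ) = 2) :
    Submodule.span ℝ {g : Fin n → Fin n → ℝ |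
      ∃ i j k s : Fin n, i ≠ j ∧ i ≠ k ∧ i ≠ s ∧ j ≠ k ∧ j ≠ s ∧ k ≠ s ∧
        g = fourCycle i j k s} = SGr n := by
  apply le_antisymm
  · rw [Submodule.span_le]
    rintro x ⟨i, j, k, s, hij, hik, his, hjk, hjs, hks, rfl⟩
    exact ⟨fc_symm i j k s, fc_diag hij hik his hjk hjs hks,
      fc_rowsum hij hik his hjk hjs hks⟩
  · rw [← span_eq hn h0 h1 h2]
    apply Submodule.span_mono
    rintro x ⟨i, rfl⟩
    rcases i with p | w
    · have hp1 := p.2.1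
      have hp2 := p.2.2
      rw [Fin.lt_def] at hp2
      exact ⟨z0, z1, p.1.1, p.1.2,
        fun h => by rw [Fin.ext_iff] at h; omega,
        fun h => by rw [Fin.ext_iff] at h; omega,
        fun h => by rw [Fin.ext_iff] at h; omega,
        fun h => by rw [Fin.ext_iff] at h; omega,
        fun h => by rw [Fin.ext_iff] at h; omega,
        fun h => by rw [Fin.ext_iff] at h; omega, rfl⟩
    · have hw := w.2
      exact ⟨z0, z1, w.1, z2,
        fun h => by rw [Fin.ext_iff] at h; omega,
        fun h => by rw [Fin.ext_iff] at h; omega,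
        fun h => by rw [Fin.ext_iff] at h; omega,
        fun h => by rw [Fin.ext_iff] at h; omega,
        fun h => by rw [Fin.ext_iff] at h; omega,
        fun h => by rw [Fin.ext_iff] at h; omega, rfl⟩


theorem stmt15 (n : ℕ) (hn : 4 ≤ n) :
    (∀ i j k s : Fin n, i ≠ j → i ≠ k → i ≠ s → j ≠ k → j ≠ s → k ≠ s →
      ∀ e, InCPI e → ginner (fourCycle i j k s) e = 0) ∧
    ∃ S : Submodule ℝ (Fin n → Fin n → ℝ),
      (S : Set (Fin n → Fin n → ℝ)) = {d | IsSymGraph d ∧ OrthCPI d} ∧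
      Submodule.span ℝ {g : Fin n → Fin n → ℝ |
        ∃ i j k s : Fin n, i ≠ j ∧ i ≠ k ∧ i ≠ s ∧ j ≠ k ∧ j ≠ s ∧ k ≠ s ∧
          g = fourCycle i j k s} = S ∧
      Module.finrank ℝ S = n * (n - 3) / 2 ∧
      LinearIndependent ℝ
        (Sum.elim
          (fun p : {p : Fin n × Fin n // 2 ≤ (p.1 : ℕ) ∧ p.1 < p.2} =>
            fourCycle (⟨0, by omega⟩ : Fin n) ⟨1, by omega⟩ p.1.1 p.1.2)
          (fun j : {j : Fin n // 3 ≤ (j : ℕ)} =>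
            fourCycle (⟨0, by omega⟩ : Fin n) ⟨1, by omega⟩ j.1 ⟨2, by omega⟩)) ∧
      Submodule.span ℝ
        (Set.range (Sum.elim
          (fun p : {p : Fin n × Fin n // 2 ≤ (p.1 : ℕ) ∧ p.1 < p.2} =>
            fourCycle (⟨0, by omega⟩ : Fin n) ⟨1, by omega⟩ p.1.1 p.1.2)
          (fun j : {j : Fin n // 3 ≤ (j : ℕ)} =>
            fourCycle (⟨0, by omega⟩ : Fin n) ⟨1, by omega⟩ j.1 ⟨2, by omega⟩))) = S := by
  constructor
  · intro i j k s hij hik his hjk hjs hks e he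
    exact orth_of_rowsum (fc_symm i j k s) (fc_diag hij hik his hjk hjs hks)
      (fc_rowsum hij hik his hjk hjs hks) e he
  · refine ⟨SGr n, SGr_carrier n, ?_, ?_, ?_, ?_⟩
    · exact span_bigset hn (z0 := ⟨0, by omega⟩) (z1 := ⟨1, by omega⟩)
        (z2 := ⟨2, by omega⟩) rfl rfl rfl
    · exact finrank_SGr hn (z0 := ⟨0, by omega⟩) (z1 := ⟨1, by omega⟩)
        (z2 := ⟨2, by omega⟩) rfl rfl rfl
    · exact indep (z0 := ⟨0, by omega⟩) (z1 := ⟨1, by omega⟩)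
        (z2 := ⟨2, by omega⟩) rfl rfl rfl
    · exact span_eq hn (z0 := ⟨0, by omega⟩) (z1 := ⟨1, by omega⟩)
        (z2 := ⟨2, by omega⟩) rfl rfl rfl
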